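/- Let G be a pure-jump finite variation process of the form G_t = Σ_{n∈ℕ} γ_n 1_{T_n ≤ t} with deterministic jump times T_n ↑ ∞ and γ_n an F_{T_n}-measurable integrable random variable for each n. Then G is a martingale with respect to (F_t) if and only if E[γ_n | F_{T_n-}] = 0 almost surely for every n ∈ ℕ. -/

import Mathlib

open MeasureTheory
open scoped NNReal

set_option maxHeartbeats 1000000 in
/-- Let `G_t = Σ_n γ_n 1_{T_n ≤ t}` be a pure-jump finite variation process
with deterministic jump times `T_n ↑ ∞` and `γ_n` an `F_{T_n}`-measurable
integrable random variable for each `n`.  Then `G` is a martingale with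
respect to the filtration `(F_t)` if and only if `E[γ_n | F_{T_n-}] = 0`
almost surely for every `n`, where
`F_{T_n-} = σ(F_0 ∪ {A ∩ {s < T_n} : A ∈ F_s, s < T_n}) = ⨆_{s < T_n} F_s`. -/
theorem pure_jump_martingale_iff
    {Ω : Type*} {m0 : MeasurableSpace Ω}
    (P : Measure Ω) [IsProbabilityMeasure P]
    (ℱ : Filtration ℝ≥0 m0)
    (T : ℕ → ℝ≥0) (hTpos : ∀ n, 0 < T n) (hTmono : StrictMono T)
    (hTlim : Filter.Tendsto T Filter.atTop Filter.atTop)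
    (γ : ℕ → Ω → ℝ)
    (hγ_int : ∀ n, Integrable (γ n) P)
    (hγ_meas : ∀ n, StronglyMeasurable[ℱ (T n)] (γ n))
    (G : ℝ≥0 → Ω → ℝ)
    (hG : ∀ t ω, G t ω = ∑' n, if T n ≤ t then γ n ω else 0) :
    Martingale G ℱ P ↔
      ∀ n, P[γ n|⨆ s ∈ Set.Iio (T n), ℱ s] =ᵐ[P] 0 := by
  classical
  have hfin : ∀ t : ℝ≥0, {n : ℕ | T n ≤ t}.Finite := by
    intro t
    obtain ⟨N, hN⟩ := Filter.eventually_atTop.mp (hTlim.eventually (Filter.eventually_gt_atTop t))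
    refine Set.Finite.subset (Set.finite_Iio N) ?_
    intro n hn
    by_contra h
    exact absurd (hN n (not_lt.mp h)) (not_lt.mpr hn)
  set Sf : ℝ≥0 → Finset ℕ := fun t => (hfin t).toFinset with hSf
  have hmem : ∀ t n, n ∈ Sf t ↔ T n ≤ t := fun t n => (hfin t).mem_toFinset
  have hGfun : ∀ t, G t = fun ω => ∑ n ∈ Sf t, γ n ω := by
    intro t; funext ω
    rw [hG]
    rw [tsum_eq_sum (s := Sf t) (fun n hn => if_neg (fun h => hn ((hmem t n).mpr h)))]
    exact Finset.sum_congr rfl fun n hn => if_pos ((hmem t n).mp hn)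
  have hGint : ∀ t, Integrable (G t) P := by
    intro t; rw [hGfun t]; exact integrable_finset_sum _ fun n _ => hγ_int n
  have hGadp : StronglyAdapted ℱ G := by
    intro t; rw [hGfun t]
    exact Finset.stronglyMeasurable_fun_sum _ fun n hn =>
      (hγ_meas n).mono (ℱ.mono ((hmem t n).mp hn))
  have hm_le : ∀ n : ℕ, (⨆ u ∈ Set.Iio (T n), ℱ u) ≤ m0 := fun n => iSup₂_le fun u _ => ℱ.le u
  constructor
  · intro hM n
    set p : ℝ≥0 := if n = 0 then 0 else T (n - 1) with hpdef
    have hp : p < T n := by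
      rcases Nat.eq_zero_or_pos n with h0 | h0
      · rw [hpdef, if_pos h0]; exact hTpos n
      · rw [hpdef, if_neg h0.ne']
        exact hTmono (Nat.sub_lt h0 one_pos)
    have hkey : ∀ s, p ≤ s → s < T n → P[γ n|ℱ s] =ᵐ[P] 0 := by
      intro s hps hsn
      have hGeq : G (T n) = G s + γ n := by
        funext ω
        rw [hGfun, hGfun]
        have hset : Sf (T n) = insert n (Sf s) := by
          ext k
          simp only [hmem, Finset.mem_insert]
          constructor
          · intro hk
            rcases lt_trichotomy k n with h | h | h
            · right
              have hn0 : n ≠ 0 := by omega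
              have hk1 : T k ≤ T (n - 1) := hTmono.monotone (Nat.le_sub_one_of_lt h)
              have hkp : T k ≤ p := by rw [hpdef, if_neg hn0]; exact hk1
              exact hkp.trans hps
            · exact Or.inl h
            · exact absurd hk (not_le.mpr (hTmono h))
          · rintro (rfl | hk)
            · exact le_rfl
            · exact hk.trans hsn.le
        simp only [hset, Pi.add_apply]
        rw [Finset.sum_insert (by simp only [hmem]; exact not_le.mpr hsn)]
        exact add_comm _ _
      have h1 : P[G (T n)|ℱ s] =ᵐ[P] G s := hM.2 s (T n) hsn.le
      have h3 : P[G (T n)|ℱ s] =ᵐ[P] G s + P[γ n|ℱ s] := by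
        rw [hGeq]
        refine (condExp_add (hGint s) (hγ_int n) (ℱ s)).trans ?_
        rw [condExp_of_stronglyMeasurable (ℱ.le s) (hGadp s) (hGint s)]
      filter_upwards [h1, h3] with ω hω1 hω2
      rw [hω1, Pi.add_apply] at hω2
      simp only [Pi.zero_apply]
      linarith
    have hC0 : ∀ s, s < T n → ∀ A : Set Ω, MeasurableSet[ℱ s] A →
        ∫ ω in A, γ n ω ∂P = 0 := by
      intro s hs A hA
      set s' := max s p with hs'def
      have hs' : s' < T n := max_lt hs hp
      have hA' : MeasurableSet[ℱ s'] A := ℱ.mono (le_max_left _ _) A hA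
      rw [← setIntegral_condExp (ℱ.le s') (hγ_int n) hA']
      have hz := hkey s' (le_max_right _ _) hs'
      calc ∫ ω in A, (P[γ n|ℱ s']) ω ∂P = ∫ ω in A, (0 : Ω → ℝ) ω ∂P :=
            integral_congr_ae (ae_restrict_of_ae hz)
        _ = 0 := by simp
    have huniv : ∫ ω, γ n ω ∂P = 0 := by
      have := hC0 p hp Set.univ MeasurableSet.univ
      simpa using this
    set C : Set (Set Ω) := ⋃ s ∈ Set.Iio (T n), {A | MeasurableSet[ℱ s] A} with hCdef
    have hgen : (⨆ u ∈ Set.Iio (T n), (ℱ u : MeasurableSpace Ω)) = MeasurableSpace.generateFrom C := by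
      apply le_antisymm
      · refine iSup₂_le fun s hs => ?_
        intro A hA
        exact MeasurableSpace.measurableSet_generateFrom (Set.mem_biUnion hs hA)
      · refine MeasurableSpace.generateFrom_le ?_
        intro A hA
        simp only [hCdef, Set.mem_iUnion, Set.mem_setOf_eq] at hA
        obtain ⟨s, hs, hA⟩ := hA
        exact (le_biSup ℱ hs) A hA
    have hpi : IsPiSystem C := by
      rintro A hA B hB -
      simp only [hCdef, Set.mem_iUnion, Set.mem_setOf_eq] at hA hB ⊢
      obtain ⟨s, hs, hA⟩ := hA
      obtain ⟨u, hu, hB⟩ := hB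
      exact ⟨max s u, Set.mem_Iio.mpr (max_lt hs hu),
        (ℱ.mono (le_max_left _ _) A hA).inter (ℱ.mono (le_max_right _ _) B hB)⟩
    have hint : ∀ A : Set Ω, MeasurableSet[⨆ u ∈ Set.Iio (T n), ℱ u] A →
        ∫ ω in A, γ n ω ∂P = 0 := by
      intro A hA
      refine @MeasurableSpace.induction_on_inter Ω (⨆ u ∈ Set.Iio (T n), ℱ u)
        (fun A _ => ∫ ω in A, γ n ω ∂P = 0) C hgen hpi ?_ ?_ ?_ ?_ A hA
      · simp
      · intro A hA
        simp only [hCdef, Set.mem_iUnion, Set.mem_setOf_eq] at hA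
        obtain ⟨s, hs, hA⟩ := hA
        exact hC0 s hs A hA
      · intro A hAm hA0
        have hA' : MeasurableSet[m0] A := hm_le n A hAm
        have := integral_add_compl (μ := P) hA' (hγ_int n)
        rw [hA0, zero_add, huniv] at this
        exact this
      · intro f hdisj hfm hf0
        have hf' : ∀ i, MeasurableSet[m0] (f i) := fun i => hm_le n _ (hfm i)
        rw [integral_iUnion hf' hdisj ((hγ_int n).integrableOn)]
        simp [hf0]
    haveI : SigmaFinite (P.trim (hm_le n)) := by
      haveI : IsFiniteMeasure (P.trim (hm_le n)) := isFiniteMeasure_trim _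
      infer_instance
    refine (ae_eq_condExp_of_forall_setIntegral_eq (hm_le n) (hγ_int n) ?_ ?_ ?_).symm
    · intro A hA hμ; exact integrableOn_zero
    · intro A hA hμ
      rw [hint A hA]
      simp
    · exact (@stronglyMeasurable_zero Ω ℝ (⨆ u ∈ Set.Iio (T n), ℱ u) _ _).aestronglyMeasurable
  · intro h
    constructor
    · exact hGadp
    · intro s t hst
      have hsub : Sf s ⊆ Sf t := by
        intro k hk
        exact (hmem t k).mpr (((hmem s k).mp hk).trans hst)
      have hGeq : G t = G s + ∑ k ∈ Sf t \ Sf s, γ k := by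
        funext ω
        rw [hGfun, hGfun]
        simp only [Pi.add_apply, Finset.sum_apply]
        rw [add_comm, Finset.sum_sdiff hsub]
      have hz : ∀ k ∈ Sf t \ Sf s, P[γ k|ℱ s] =ᵐ[P] 0 := by
        intro k hk
        have hks : s < T k := by
          rcases Finset.mem_sdiff.mp hk with ⟨_, hk2⟩
          exact not_le.mp (fun hle => hk2 ((hmem s k).mpr hle))
        have hle : (ℱ s : MeasurableSpace Ω) ≤ ⨆ u ∈ Set.Iio (T k), ℱ u := le_biSup _ hks
        calc P[γ k|ℱ s] =ᵐ[P] P[P[γ k|⨆ u ∈ Set.Iio (T k), ℱ u]|ℱ s] :=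
              (condExp_condExp_of_le hle (hm_le k)).symm
          _ =ᵐ[P] P[(0 : Ω → ℝ)|ℱ s] := condExp_congr_ae (h k)
          _ =ᵐ[P] 0 := by rw [condExp_zero]
      have hsum : P[∑ k ∈ Sf t \ Sf s, γ k|ℱ s] =ᵐ[P] 0 := by
        refine (condExp_finsetSum (fun k _ => hγ_int k) (ℱ s)).trans ?_
        have hall : ∀ᵐ ω ∂P, ∀ k ∈ Sf t \ Sf s, (P[γ k|ℱ s]) ω = 0 := by
          rw [Filter.eventually_all_finset]
          intro k hk
          filter_upwards [hz k hk] with ω hω using hω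
        filter_upwards [hall] with ω hω
        simp only [Finset.sum_apply, Pi.zero_apply]
        exact Finset.sum_eq_zero hω
      rw [hGeq]
      refine (condExp_add (hGint s) (integrable_finset_sum' _ fun k _ => hγ_int k) (ℱ s)).trans ?_
      rw [condExp_of_stronglyMeasurable (ℱ.le s) (hGadp s) (hGint s)]
      filter_upwards [hsum] with ω hω
      simp only [Pi.add_apply, Pi.zero_apply] at hω ⊢
      simp [hω]
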